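/- Let n ≥ 2, let Ω ⊆ ℝⁿ be open, let Ψ̄ : ℝⁿ∖{0} → ℝ be C² and positively one-homogeneous (Ψ̄(tp) = t·Ψ̄(p) for t > 0), let F : ℝ → ℝ be C², let H be C² on an interval containing w(Ω) with H' > 0, and let w : Ω → ℝ be C² with ∇w(x) ≠ 0 for all x ∈ Ω. Set u = H∘w and Ψ = F∘Ψ̄. Then for every x ∈ Ω: ∑_{i,j} Ψ_ij(∇u)·u_ij = F'(H'(w)·Ψ̄(∇w))·∑_{i,j} Ψ̄_ij(∇w)·w_ij + F''(H'(w)·Ψ̄(∇w))·H''(w)·Ψ̄(∇w)² + F''(H'(w)·Ψ̄(∇w))·H'(w)·∑_{i,j} Ψ̄_i(∇w)·Ψ̄_j(∇w)·w_ij, where subscripts of Ψ, Ψ̄ denote partial derivatives in the gradient variable evaluated as indicated, and subscripts of u, w denote second partial derivatives in x. -/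

import Mathlib

open scoped Topology

section aux
variable {E : Type*} [NormedAddCommGroup E] [NormedSpace ℝ E]

lemma chain1 {φ : ℝ → ℝ} {f : E → ℝ} {x : E}
    (hφ : DifferentiableAt ℝ φ (f x)) (hf : DifferentiableAt ℝ f x) :
    fderiv ℝ (fun y => φ (f y)) x = deriv φ (f x) • fderiv ℝ f x := by
  rw [show (fun y => φ (f y)) = φ ∘ f from rfl, fderiv_comp x hφ hf]
  ext v
  simp [fderiv_eq_smul_deriv, mul_comm]

lemma chain2 {φ : ℝ → ℝ} {f : E → ℝ} {s : Set E} {J : Set ℝ}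
    (hs : IsOpen s) (hJ : IsOpen J) (hf : ContDiffOn ℝ 2 f s)
    (hφ : ContDiffOn ℝ 2 φ J) (hmap : Set.MapsTo f s J) {x : E} (hx : x ∈ s) (v v' : E) :
    fderiv ℝ (fderiv ℝ (fun y => φ (f y))) x v v' =
      deriv (deriv φ) (f x) * (fderiv ℝ f x v) * (fderiv ℝ f x v') +
      deriv φ (f x) * fderiv ℝ (fderiv ℝ f) x v v' := by
  have hfd : ∀ y ∈ s, DifferentiableAt ℝ f y := fun y hy =>
    (hf.differentiableOn two_ne_zero).differentiableAt (hs.mem_nhds hy)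
  have hφd : ∀ t ∈ J, DifferentiableAt ℝ φ t := fun t ht =>
    (hφ.differentiableOn two_ne_zero).differentiableAt (hJ.mem_nhds ht)
  have heq : fderiv ℝ (fun y => φ (f y)) =ᶠ[𝓝 x]
      fun y => deriv φ (f y) • fderiv ℝ f y :=
    Filter.eventually_of_mem (hs.mem_nhds hx) fun y hy =>
      chain1 (hφd _ (hmap hy)) (hfd _ hy)
  rw [heq.fderiv_eq]
  have hφ' : ∀ t ∈ J, DifferentiableAt ℝ (deriv φ) t := fun t ht =>
    ((hφ.deriv_of_isOpen hJ (m := 1) one_add_one_eq_two.le).differentiableOn one_ne_zero).differentiableAt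
      (hJ.mem_nhds ht)
  have hcd : DifferentiableAt ℝ (fun y => deriv φ (f y)) x :=
    ((hφ' _ (hmap hx)).comp x (hfd _ hx) : )
  have hLd : DifferentiableAt ℝ (fderiv ℝ f) x :=
    ((hf.fderiv_of_isOpen hs (m := 1) one_add_one_eq_two.le).differentiableOn one_ne_zero).differentiableAt
      (hs.mem_nhds hx)
  rw [fderiv_fun_smul hcd hLd]
  have hc : fderiv ℝ (fun y => deriv φ (f y)) x v =
      deriv (deriv φ) (f x) * fderiv ℝ f x v := by
    rw [chain1 (hφ' _ (hmap hx)) (hfd _ hx)]; simp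
  simp [hc]
  ring

lemma smul_comp_clm (t : ℝ) (L : E →L[ℝ] ℝ) :
    L.comp (t • ContinuousLinearMap.id ℝ E) = t • L := by
  ext v; simp [mul_comm]

lemma grad_homog {Ψb : E → ℝ} (hC2 : ContDiffOn ℝ 2 Ψb {p : E | p ≠ 0})
    (hom : ∀ t > (0:ℝ), ∀ p : E, p ≠ 0 → Ψb (t • p) = t * Ψb p)
    {t : ℝ} (ht : 0 < t) {p : E} (hp : p ≠ 0) :
    fderiv ℝ Ψb (t • p) = fderiv ℝ Ψb p := by
  have hopen : IsOpen {p : E | p ≠ 0} := isOpen_compl_singleton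
  have hd1 : ∀ q : E, q ≠ 0 → DifferentiableAt ℝ Ψb q := fun q hq =>
    (hC2.differentiableOn two_ne_zero).differentiableAt (hopen.mem_nhds hq)
  have htp : t • p ≠ 0 := smul_ne_zero (ne_of_gt ht) hp
  have hsmul : HasFDerivAt (fun y : E => t • y) (t • ContinuousLinearMap.id ℝ E) p := by
    exact (hasFDerivAt_id p).const_smul t
  have h1 : HasFDerivAt (fun y => Ψb (t • y))
      ((fderiv ℝ Ψb (t • p)).comp (t • ContinuousLinearMap.id ℝ E)) p :=
    (hd1 _ htp).hasFDerivAt.comp p hsmul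
  have heq : (fun y => Ψb (t • y)) =ᶠ[𝓝 p] fun y => t * Ψb y :=
    Filter.eventually_of_mem (hopen.mem_nhds hp) fun y hy => hom t ht y hy
  have h2 : fderiv ℝ (fun y => t * Ψb y) p = t • fderiv ℝ Ψb p :=
    fderiv_const_mul (hd1 p hp) t
  have h3 : t • fderiv ℝ Ψb (t • p) = t • fderiv ℝ Ψb p := by
    rw [← smul_comp_clm, ← h1.fderiv, heq.fderiv_eq, h2]
  exact smul_right_injective (E →L[ℝ] ℝ) (ne_of_gt ht) h3

lemma snd_homog {Ψb : E → ℝ} (hC2 : ContDiffOn ℝ 2 Ψb {p : E | p ≠ 0})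
    (hom : ∀ t > (0:ℝ), ∀ p : E, p ≠ 0 → Ψb (t • p) = t * Ψb p)
    {t : ℝ} (ht : 0 < t) {p : E} (hp : p ≠ 0) :
    fderiv ℝ (fderiv ℝ Ψb) (t • p) = t⁻¹ • fderiv ℝ (fderiv ℝ Ψb) p := by
  have hopen : IsOpen {p : E | p ≠ 0} := isOpen_compl_singleton
  have hd2 : ∀ q : E, q ≠ 0 → DifferentiableAt ℝ (fderiv ℝ Ψb) q := fun q hq =>
    ((hC2.fderiv_of_isOpen hopen (m := 1) one_add_one_eq_two.le).differentiableOn one_ne_zero).differentiableAt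
      (hopen.mem_nhds hq)
  have htp : t • p ≠ 0 := smul_ne_zero (ne_of_gt ht) hp
  have hsmul : HasFDerivAt (fun y : E => t • y) (t • ContinuousLinearMap.id ℝ E) p := by
    exact (hasFDerivAt_id p).const_smul t
  have h1 : HasFDerivAt (fun y => fderiv ℝ Ψb (t • y))
      ((fderiv ℝ (fderiv ℝ Ψb) (t • p)).comp (t • ContinuousLinearMap.id ℝ E)) p :=
    (hd2 _ htp).hasFDerivAt.comp p hsmul
  have heq : (fun y => fderiv ℝ Ψb (t • y)) =ᶠ[𝓝 p] fderiv ℝ Ψb :=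
    Filter.eventually_of_mem (hopen.mem_nhds hp) fun y hy => grad_homog hC2 hom ht hy
  have h3 : (fderiv ℝ (fderiv ℝ Ψb) (t • p)).comp (t • ContinuousLinearMap.id ℝ E)
      = fderiv ℝ (fderiv ℝ Ψb) p := by
    rw [← h1.fderiv]; exact heq.fderiv_eq
  have h4 : t • fderiv ℝ (fderiv ℝ Ψb) (t • p) = fderiv ℝ (fderiv ℝ Ψb) p := by
    rw [← h3]; ext v v'; simp [mul_comm]
  rw [← h4, smul_smul, inv_mul_cancel₀ (ne_of_gt ht), one_smul]

lemma euler1 {Ψb : E → ℝ} (hC2 : ContDiffOn ℝ 2 Ψb {p : E | p ≠ 0})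
    (hom : ∀ t > (0:ℝ), ∀ p : E, p ≠ 0 → Ψb (t • p) = t * Ψb p)
    {p : E} (hp : p ≠ 0) : fderiv ℝ Ψb p p = Ψb p := by
  have hopen : IsOpen {p : E | p ≠ 0} := isOpen_compl_singleton
  have hd1 : DifferentiableAt ℝ Ψb p :=
    (hC2.differentiableOn two_ne_zero).differentiableAt (hopen.mem_nhds hp)
  have hsm : HasDerivAt (fun s : ℝ => s • p) p 1 := by
    simpa using (hasDerivAt_id (1:ℝ)).smul_const p
  have h1 : HasDerivAt (fun s : ℝ => Ψb (s • p)) (fderiv ℝ Ψb p p) 1 := by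
    have hd1' : HasFDerivAt Ψb (fderiv ℝ Ψb p) ((1:ℝ) • p) := by
      rw [one_smul]; exact hd1.hasFDerivAt
    exact hd1'.comp_hasDerivAt 1 hsm
  have heq : (fun s : ℝ => Ψb (s • p)) =ᶠ[𝓝 1] fun s => s * Ψb p :=
    Filter.eventually_of_mem (isOpen_Ioi.mem_nhds (by norm_num : (1:ℝ) ∈ Set.Ioi 0))
      fun s hs => hom s hs p hp
  have h2 : HasDerivAt (fun s : ℝ => Ψb (s • p)) (Ψb p) 1 := by
    have : HasDerivAt (fun s : ℝ => s * Ψb p) (Ψb p) 1 := by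
      simpa using (hasDerivAt_id (1:ℝ)).mul_const (Ψb p)
    exact this.congr_of_eventuallyEq heq
  exact h1.unique h2

lemma euler2 {Ψb : E → ℝ} (hC2 : ContDiffOn ℝ 2 Ψb {p : E | p ≠ 0})
    (hom : ∀ t > (0:ℝ), ∀ p : E, p ≠ 0 → Ψb (t • p) = t * Ψb p)
    {p : E} (hp : p ≠ 0) : fderiv ℝ (fderiv ℝ Ψb) p p p = 0 := by
  have hopen : IsOpen {p : E | p ≠ 0} := isOpen_compl_singleton
  have hd2 : DifferentiableAt ℝ (fderiv ℝ Ψb) p :=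
    ((hC2.fderiv_of_isOpen hopen (m := 1) one_add_one_eq_two.le).differentiableOn one_ne_zero).differentiableAt
      (hopen.mem_nhds hp)
  have hsm : HasDerivAt (fun s : ℝ => s • p) p 1 := by
    simpa using (hasDerivAt_id (1:ℝ)).smul_const p
  have hg : HasFDerivAt (fun q : E => fderiv ℝ Ψb q p)
      ((ContinuousLinearMap.apply ℝ ℝ p).comp (fderiv ℝ (fderiv ℝ Ψb) p)) p :=
    (ContinuousLinearMap.apply ℝ ℝ p).hasFDerivAt.comp p hd2.hasFDerivAt
  have h1 : HasDerivAt (fun s : ℝ => fderiv ℝ Ψb (s • p) p)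
      (fderiv ℝ (fderiv ℝ Ψb) p p p) 1 := by
    have hg' : HasFDerivAt (fun q : E => fderiv ℝ Ψb q p)
        ((ContinuousLinearMap.apply ℝ ℝ p).comp (fderiv ℝ (fderiv ℝ Ψb) p)) ((1:ℝ) • p) := by
      rw [one_smul]; exact hg
    exact hg'.comp_hasDerivAt 1 hsm
  have heq : (fun s : ℝ => fderiv ℝ Ψb (s • p) p) =ᶠ[𝓝 1]
      fun _ => fderiv ℝ Ψb p p :=
    Filter.eventually_of_mem (isOpen_Ioi.mem_nhds (by norm_num : (1:ℝ) ∈ Set.Ioi 0))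
      fun s hs => by
        show fderiv ℝ Ψb (s • p) p = fderiv ℝ Ψb p p
        rw [grad_homog hC2 hom hs hp]
  have h2 : HasDerivAt (fun s : ℝ => fderiv ℝ Ψb (s • p) p) 0 1 :=
    (hasDerivAt_const 1 (fderiv ℝ Ψb p p)).congr_of_eventuallyEq heq
  exact h1.unique h2

end aux

lemma alg_lemma (n : ℕ) (a b c t S : ℝ) (ht : t ≠ 0) (A pp : Fin n → ℝ)
    (B W : Fin n → Fin n → ℝ)
    (hS : ∑ i, A i * pp i = S)
    (hB : ∑ i, ∑ j, B i j * (pp i * pp j) = 0) :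
    ∑ i, ∑ j, (a * A i * A j + b * (t⁻¹ * B i j)) * (c * pp i * pp j + t * W i j)
    = b * (∑ i, ∑ j, B i j * W i j) + a * c * S ^ 2 +
      a * t * (∑ i, ∑ j, A i * A j * W i j) := by
  have expand : ∀ i j, (a * A i * A j + b * (t⁻¹ * B i j)) * (c * pp i * pp j + t * W i j)
      = a * c * ((A i * pp i) * (A j * pp j)) + a * t * (A i * A j * W i j)
        + b * c * t⁻¹ * (B i j * (pp i * pp j)) + b * (B i j * W i j) := by
    intro i j; field_simp; ring
  calc ∑ i, ∑ j, (a * A i * A j + b * (t⁻¹ * B i j)) * (c * pp i * pp j + t * W i j)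
      = ∑ i, ∑ j, (a * c * ((A i * pp i) * (A j * pp j)) + a * t * (A i * A j * W i j)
        + b * c * t⁻¹ * (B i j * (pp i * pp j)) + b * (B i j * W i j)) := by
        exact Finset.sum_congr rfl fun i _ => Finset.sum_congr rfl fun j _ => expand i j
    _ = a * c * (∑ i, ∑ j, (A i * pp i) * (A j * pp j))
        + a * t * (∑ i, ∑ j, A i * A j * W i j)
        + b * c * t⁻¹ * (∑ i, ∑ j, B i j * (pp i * pp j))
        + b * (∑ i, ∑ j, B i j * W i j) := by
        simp only [Finset.sum_add_distrib, Finset.mul_sum]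
    _ = b * (∑ i, ∑ j, B i j * W i j) + a * c * S ^ 2 +
        a * t * (∑ i, ∑ j, A i * A j * W i j) := by
        rw [← Finset.sum_mul_sum, hS, hB]; ring

/-- The standard basis vector `eᵢ` of `ℝⁿ`. -/
noncomputable def ee (n : ℕ) (i : Fin n) : EuclideanSpace ℝ (Fin n) :=
  EuclideanSpace.single i 1

/-- The gradient vector of `w` at `x`, with components the partial derivatives. -/
noncomputable def gradVec (n : ℕ) (w : EuclideanSpace ℝ (Fin n) → ℝ)
    (x : EuclideanSpace ℝ (Fin n)) : EuclideanSpace ℝ (Fin n) :=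
  (EuclideanSpace.equiv (Fin n) ℝ).symm fun i => fderiv ℝ w x (ee n i)

lemma gradVec_apply (n : ℕ) (w : EuclideanSpace ℝ (Fin n) → ℝ)
    (x : EuclideanSpace ℝ (Fin n)) (i : Fin n) :
    gradVec n w x i = fderiv ℝ w x (ee n i) := rfl

lemma expand_basis (n : ℕ) (p : EuclideanSpace ℝ (Fin n)) :
    p = ∑ i, p i • ee n i := by
  ext j
  rw [show (∑ i, p i • ee n i) j = ∑ i, (p i • ee n i) j from by rw [WithLp.ofLp_sum]; exact Finset.sum_apply j _ _]
  simp [ee, EuclideanSpace.single_apply]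

lemma clm_eval_basis (n : ℕ) (L : EuclideanSpace ℝ (Fin n) →L[ℝ] ℝ)
    (p : EuclideanSpace ℝ (Fin n)) : L p = ∑ i, p i * L (ee n i) := by
  conv_lhs => rw [expand_basis n p]
  simp [smul_eq_mul]

lemma clm2_eval_basis (n : ℕ)
    (M : EuclideanSpace ℝ (Fin n) →L[ℝ] (EuclideanSpace ℝ (Fin n) →L[ℝ] ℝ))
    (p q : EuclideanSpace ℝ (Fin n)) :
    M p q = ∑ i, ∑ j, (M (ee n i) (ee n j)) * (p i * q j) := by
  conv_lhs => rw [expand_basis n p]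
  rw [map_sum]
  rw [ContinuousLinearMap.sum_apply]
  refine Finset.sum_congr rfl fun i _ => ?_
  rw [map_smul, ContinuousLinearMap.smul_apply]
  rw [clm_eval_basis n (M (ee n i)) q]
  rw [smul_eq_mul, Finset.mul_sum]
  exact Finset.sum_congr rfl fun j _ => by ring

lemma gradVec_ne_zero (n : ℕ) (w : EuclideanSpace ℝ (Fin n) → ℝ)
    (x : EuclideanSpace ℝ (Fin n)) (h : fderiv ℝ w x ≠ 0) :
    gradVec n w x ≠ 0 := by
  intro h0
  apply h
  ext p
  rw [clm_eval_basis]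
  have : ∀ i, fderiv ℝ w x (ee n i) = 0 := by
    intro i
    have := congrFun (congrArg (fun q : EuclideanSpace ℝ (Fin n) => (q : Fin n → ℝ)) h0) i
    simpa [gradVec_apply] using this
  simp [this]

lemma itd2 {f : EuclideanSpace ℝ (Fin n) → ℝ} (z v v' : EuclideanSpace ℝ (Fin n)) :
    iteratedFDeriv ℝ 2 f z ![v, v'] = fderiv ℝ (fderiv ℝ f) z v v' := by
  rw [iteratedFDeriv_two_apply]; simp

/-- **Chain-rule decomposition of the anisotropic operator under re-stacking**:
for `u = H ∘ w` and `Ψ = F ∘ Ψ̄` with `Ψ̄` positively one-homogeneous,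
`Ψ_ij(∇u)u_ij = F'(H'(w)Ψ̄(∇w))·Ψ̄_ij(∇w)w_ij + F''(H'(w)Ψ̄(∇w))·H''(w)·Ψ̄(∇w)²
 + F''(H'(w)Ψ̄(∇w))·H'(w)·Ψ̄_i(∇w)Ψ̄_j(∇w)w_ij`. -/
theorem restacking_decomposition (n : ℕ) (hn : 2 ≤ n)
    (Ω : Set (EuclideanSpace ℝ (Fin n))) (hΩ : IsOpen Ω)
    (Ψb : EuclideanSpace ℝ (Fin n) → ℝ)
    (hΨb_C2 : ContDiffOn ℝ 2 Ψb {p : EuclideanSpace ℝ (Fin n) | p ≠ 0})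
    (hΨb_homog : ∀ t > (0 : ℝ), ∀ p : EuclideanSpace ℝ (Fin n), p ≠ 0 →
      Ψb (t • p) = t * Ψb p)
    (F : ℝ → ℝ) (hF : ContDiff ℝ 2 F)
    (J : Set ℝ) (hJ_open : IsOpen J) (hJ_conn : J.OrdConnected)
    (H : ℝ → ℝ) (hH : ContDiffOn ℝ 2 H J)
    (hH' : ∀ s ∈ J, 0 < deriv H s)
    (w : EuclideanSpace ℝ (Fin n) → ℝ) (hw_C2 : ContDiffOn ℝ 2 w Ω)
    (hw_range : ∀ x ∈ Ω, w x ∈ J)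
    (hw_grad : ∀ x ∈ Ω, fderiv ℝ w x ≠ 0) :
    ∀ x ∈ Ω,
      ∑ i : Fin n, ∑ j : Fin n,
        iteratedFDeriv ℝ 2 (fun p => F (Ψb p)) (gradVec n (fun y => H (w y)) x)
            ![ee n i, ee n j] *
          iteratedFDeriv ℝ 2 (fun y => H (w y)) x ![ee n i, ee n j] =
      deriv F (deriv H (w x) * Ψb (gradVec n w x)) *
        (∑ i : Fin n, ∑ j : Fin n,
          iteratedFDeriv ℝ 2 Ψb (gradVec n w x) ![ee n i, ee n j] *
            iteratedFDeriv ℝ 2 w x ![ee n i, ee n j]) +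
      deriv (deriv F) (deriv H (w x) * Ψb (gradVec n w x)) * deriv (deriv H) (w x) *
        Ψb (gradVec n w x) ^ 2 +
      deriv (deriv F) (deriv H (w x) * Ψb (gradVec n w x)) * deriv H (w x) *
        (∑ i : Fin n, ∑ j : Fin n,
          fderiv ℝ Ψb (gradVec n w x) (ee n i) * fderiv ℝ Ψb (gradVec n w x) (ee n j) *
            iteratedFDeriv ℝ 2 w x ![ee n i, ee n j]) := by
  intro x hx
  have hopen : IsOpen {q : EuclideanSpace ℝ (Fin n) | q ≠ 0} := isOpen_compl_singleton
  set p := gradVec n w x with hpdef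
  have hp : p ≠ 0 := gradVec_ne_zero n w x (hw_grad x hx)
  have hwx : w x ∈ J := hw_range x hx
  set t := deriv H (w x) with htdef
  have ht : 0 < t := hH' _ hwx
  have ht0 : t ≠ 0 := ne_of_gt ht
  have hwd : DifferentiableAt ℝ w x :=
    (hw_C2.differentiableOn two_ne_zero).differentiableAt (hΩ.mem_nhds hx)
  have hHd : DifferentiableAt ℝ H (w x) :=
    (hH.differentiableOn two_ne_zero).differentiableAt (hJ_open.mem_nhds hwx)
  have hmap : Set.MapsTo w Ω J := fun y hy => hw_range y hy
  -- gradient of u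
  have hgu : gradVec n (fun y => H (w y)) x = t • p := by
    ext i
    rw [gradVec_apply, chain1 hHd hwd]
    simp [hpdef, gradVec_apply, mul_comm, htdef]
  have hq : t • p ≠ 0 := smul_ne_zero ht0 hp
  -- second derivative of u
  have hu2 : ∀ i j : Fin n, iteratedFDeriv ℝ 2 (fun y => H (w y)) x ![ee n i, ee n j]
      = deriv (deriv H) (w x) * p i * p j +
        t * fderiv ℝ (fderiv ℝ w) x (ee n i) (ee n j) := by
    intro i j
    rw [itd2, chain2 hΩ hJ_open hw_C2 hH hmap hx]
    rfl
  -- second derivative of Ψ at ∇u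
  have hΨ2 : ∀ i j : Fin n,
      iteratedFDeriv ℝ 2 (fun q => F (Ψb q)) (gradVec n (fun y => H (w y)) x)
          ![ee n i, ee n j]
      = deriv (deriv F) (t * Ψb p) * fderiv ℝ Ψb p (ee n i) * fderiv ℝ Ψb p (ee n j)
        + deriv F (t * Ψb p) *
            (t⁻¹ * fderiv ℝ (fderiv ℝ Ψb) p (ee n i) (ee n j)) := by
    intro i j
    rw [itd2, hgu,
      chain2 hopen isOpen_univ hΨb_C2 hF.contDiffOn (Set.mapsTo_univ _ _) hq,
      hΨb_homog t ht p hp, grad_homog hΨb_C2 hΨb_homog ht hp,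
      snd_homog hΨb_C2 hΨb_homog ht hp]
    simp
  -- Euler relations
  have hS : ∑ i, fderiv ℝ Ψb p (ee n i) * p i = Ψb p := by
    rw [← euler1 hΨb_C2 hΨb_homog hp, clm_eval_basis n _ p]
    exact Finset.sum_congr rfl fun i _ => mul_comm _ _
  have hB0 : ∑ i, ∑ j,
      fderiv ℝ (fderiv ℝ Ψb) p (ee n i) (ee n j) * (p i * p j) = 0 := by
    rw [← clm2_eval_basis]
    exact euler2 hΨb_C2 hΨb_homog hp
  simp only [hΨ2, hu2, itd2]
  exact alg_lemma n (deriv (deriv F) (t * Ψb p)) (deriv F (t * Ψb p))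
    (deriv (deriv H) (w x)) t (Ψb p) ht0
    (fun i => fderiv ℝ Ψb p (ee n i)) (fun i => p i)
    (fun i j => fderiv ℝ (fderiv ℝ Ψb) p (ee n i) (ee n j))
    (fun i j => fderiv ℝ (fderiv ℝ w) x (ee n i) (ee n j)) hS hB0
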